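/- Let b ≥ 2 and z ≥ 0 be integers and set m = b^z. Then the staircase index set S = {(i, j) : 0 ≤ i ≤ j < m} can be partitioned into a finite family F of pairwise disjoint interval rectangles whose union is S, such that: (1) the family F has at most 2·b^z − 1 members; (2) every row index i ∈ {0, …, m−1} belongs to the row interval of at most z + 1 members of F; and (3) every column index j ∈ {0, …, m−1} belongs to the column interval of at most z·(b − 1) + 1 members of F. (The core recursive construction in the proof of Lemma 6 (l:part) of the paper, with the explicit bounds rowcnt(z) ≤ z+1, colcnt(z) ≤ z(b−1)+1 and rectcnt(z) ≤ 2b^z − 1.) -/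
import Mathlib


/-- The interval rectangle `{a, …, a'} × {c, …, c'}` described by a pair of
pairs `((a, a'), (c, c'))`, as a finset of `ℕ × ℕ`. -/
def rect (e : (ℕ × ℕ) × (ℕ × ℕ)) : Finset (ℕ × ℕ) :=
  Finset.Icc e.1.1 e.1.2 ×ˢ Finset.Icc e.2.1 e.2.2

lemma mem_rect {e : (ℕ × ℕ) × (ℕ × ℕ)} {x y : ℕ} :
    (x, y) ∈ rect e ↔ (e.1.1 ≤ x ∧ x ≤ e.1.2) ∧ (e.2.1 ≤ y ∧ y ≤ e.2.2) := by
  simp [rect, Finset.mem_product, Finset.mem_Icc]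

/-- The recursive partition in Lemma 6 (l:part) for `m = b ^ z`: the staircase
set `{(i, j) : i ≤ j < b ^ z}` can be partitioned into at most `2 · b^z − 1`
pairwise disjoint nonempty interval rectangles so that every row belongs to
at most `z + 1` of them and every column to at most `z·(b − 1) + 1` of them. -/
theorem staircase_partition_pow (b z : ℕ) (hb : 2 ≤ b) :
    ∃ F : Finset ((ℕ × ℕ) × (ℕ × ℕ)),
      (∀ e ∈ F, e.1.1 ≤ e.1.2 ∧ e.2.1 ≤ e.2.2) ∧
      (∀ e1 ∈ F, ∀ e2 ∈ F, e1 ≠ e2 → Disjoint (rect e1) (rect e2)) ∧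
      (∀ i j : ℕ, (i ≤ j ∧ j < b ^ z) ↔ ∃ e ∈ F, (i, j) ∈ rect e) ∧
      F.card ≤ 2 * b ^ z - 1 ∧
      (∀ i < b ^ z,
        (F.filter (fun e => e.1.1 ≤ i ∧ i ≤ e.1.2)).card ≤ z + 1) ∧
      (∀ j < b ^ z,
        (F.filter (fun e => e.2.1 ≤ j ∧ j ≤ e.2.2)).card ≤ z * (b - 1) + 1) := by
  induction z with
  | zero =>
    refine ⟨{((0,0),(0,0))}, ?_, ?_, ?_, ?_, ?_, ?_⟩
    · intro e he; simp at he; subst he; simp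
    · intro e1 h1 e2 h2 hne
      simp at h1 h2; subst h1; subst h2; exact absurd rfl hne
    · intro i j; simp [mem_rect]; omega
    · simp
    · intro i _; exact le_trans (Finset.card_filter_le _ _) (by simp)
    · intro j _; exact le_trans (Finset.card_filter_le _ _) (by simp)
  | succ z ih =>
    obtain ⟨F, hne, hdisj, hcov, hcard, hrow, hcol⟩ := ih
    obtain ⟨m, hm⟩ : ∃ m, m = b ^ z := ⟨_, rfl⟩
    rw [← hm] at hcov hcard hrow hcol
    have hm1 : 1 ≤ m := by rw [hm]; exact Nat.one_le_pow _ _ (by omega)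
    have hbm : b ^ (z+1) = b * m := by rw [hm, pow_succ]; ring
    have hbound : ∀ e ∈ F, e.1.1 ≤ e.1.2 ∧ e.2.1 ≤ e.2.2 ∧ e.1.2 ≤ e.2.2 ∧ e.2.2 < m := by
      intro e he
      obtain ⟨h1, h2⟩ := hne e he
      have hmem : ((e.1.2 : ℕ), (e.2.2 : ℕ)) ∈ rect e :=
        mem_rect.mpr ⟨⟨h1, le_refl _⟩, ⟨h2, le_refl _⟩⟩
      have := (hcov e.1.2 e.2.2).mpr ⟨e, he, hmem⟩
      exact ⟨h1, h2, this.1, this.2⟩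
    have hdivq : ∀ x : ℕ, (x / m) * m ≤ x ∧ x < (x / m) * m + m := by
      intro x
      have h1 := Nat.div_add_mod x m
      have h2 : x % m < m := Nat.mod_lt _ hm1
      have h3 : m * (x / m) = (x / m) * m := mul_comm _ _
      omega
    have hdiv : ∀ k x : ℕ, k * m ≤ x → x < k * m + m → x / m = k := by
      intro k x h1 h2
      exact Nat.div_eq_of_lt_le h1 (by rw [add_mul, one_mul]; omega)
    classical
    set bigf : ℕ → (ℕ × ℕ) × (ℕ × ℕ) :=
      fun k => ((k*m, (k+1)*m - 1), ((k+1)*m, b*m - 1)) with hbigf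
    set big : Finset ((ℕ × ℕ) × (ℕ × ℕ)) := (Finset.range (b-1)).image bigf with hbig
    set shf : ℕ × ((ℕ × ℕ) × (ℕ × ℕ)) → (ℕ × ℕ) × (ℕ × ℕ) :=
      (fun p => ((p.2.1.1 + p.1*m, p.2.1.2 + p.1*m), (p.2.2.1 + p.1*m, p.2.2.2 + p.1*m)))
      with hshf
    set sh : Finset ((ℕ × ℕ) × (ℕ × ℕ)) := (Finset.range b ×ˢ F).image shf with hsh
    have hbig_mem : ∀ e ∈ big, ∃ k, k < b - 1 ∧ e = bigf k := by
      intro e he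
      rw [hbig, Finset.mem_image] at he
      obtain ⟨k, hk, rfl⟩ := he
      exact ⟨k, Finset.mem_range.mp hk, rfl⟩
    have hsh_mem : ∀ e ∈ sh, ∃ k, k < b ∧ ∃ e' ∈ F, e = shf (k, e') := by
      intro e he
      rw [hsh, Finset.mem_image] at he
      obtain ⟨⟨k, e'⟩, hk, rfl⟩ := he
      rw [Finset.mem_product, Finset.mem_range] at hk
      exact ⟨k, hk.1, e', hk.2, rfl⟩
    -- membership builders
    have hbig_rect : ∀ k x y : ℕ, k*m ≤ x → x ≤ (k+1)*m - 1 → (k+1)*m ≤ y →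
        y ≤ b*m - 1 → (x, y) ∈ rect (bigf k) := by
      intro k x y h1 h2 h3 h4
      simp only [hbigf, rect, Finset.mem_product, Finset.mem_Icc]
      omega
    have hsh_rect : ∀ (k : ℕ) (e' : (ℕ × ℕ) × (ℕ × ℕ)) (x y : ℕ),
        e'.1.1 + k*m ≤ x → x ≤ e'.1.2 + k*m → e'.2.1 + k*m ≤ y → y ≤ e'.2.2 + k*m →
        (x, y) ∈ rect (shf (k, e')) := by
      intro k e' x y h1 h2 h3 h4
      simp only [hshf, rect, Finset.mem_product, Finset.mem_Icc]
      omega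
    -- block determination
    have hbig_blk : ∀ k x y : ℕ, k < b - 1 → (x, y) ∈ rect (bigf k) →
        x / m = k ∧ (k+1)*m ≤ y ∧ y ≤ b*m - 1 := by
      intro k x y hk hmem
      obtain ⟨⟨h1, h2⟩, h3, h4⟩ := mem_rect.mp hmem
      simp only [hbigf] at h1 h2 h3 h4
      have e1 : (k+1)*m = k*m + m := by ring
      exact ⟨hdiv k x h1 (by omega), by omega, by omega⟩
    have hsh_blk : ∀ k e', e' ∈ F → ∀ x y : ℕ, (x, y) ∈ rect (shf (k, e')) →
        x / m = k ∧ y / m = k ∧ (x - k*m, y - k*m) ∈ rect e' := by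
      intro k e' he' x y hmem
      obtain ⟨⟨h1, h2⟩, h3, h4⟩ := mem_rect.mp hmem
      simp only [hshf] at h1 h2 h3 h4
      obtain ⟨b1, b2, b3, b4⟩ := hbound e' he'
      refine ⟨hdiv k x (by omega) (by omega), hdiv k y (by omega) (by omega), ?_⟩
      exact mem_rect.mpr ⟨⟨by omega, by omega⟩, by omega, by omega⟩
    have key_bs : ∀ k, k < b - 1 → ∀ l e', e' ∈ F → ∀ x y : ℕ,
        (x, y) ∈ rect (bigf k) → (x, y) ∈ rect (shf (l, e')) → False := by
      intro k hk l e' he' x y hm1' hm2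
      obtain ⟨hx1, hy1, _⟩ := hbig_blk k x y hk hm1'
      obtain ⟨hx2, hy2, _⟩ := hsh_blk l e' he' x y hm2
      have hkl : k = l := by omega
      subst hkl
      obtain ⟨hq1, hq2⟩ := hdivq y
      rw [hy2] at hq1 hq2
      have e1 : (k+1)*m = k*m + m := by ring
      omega
    refine ⟨big ∪ sh, ?_, ?_, ?_, ?_, ?_, ?_⟩
    · -- nonemptiness of intervals
      intro e he
      rcases Finset.mem_union.mp he with h | h
      · obtain ⟨k, hk, rfl⟩ := hbig_mem e h
        simp only [hbigf]
        have e1 : (k+1)*m = k*m + m := by ring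
        have e2 : (k+2)*m ≤ b*m := Nat.mul_le_mul_right m (by omega)
        have e3 : (k+2)*m = k*m + 2*m := by ring
        exact ⟨by omega, by omega⟩
      · obtain ⟨k, hk, e', he', rfl⟩ := hsh_mem e h
        obtain ⟨b1, b2, _, _⟩ := hbound e' he'
        simp only [hshf]
        exact ⟨by omega, by omega⟩
    · -- pairwise disjoint
      intro e1 h1 e2 h2 hne12
      rw [Finset.disjoint_left]
      rintro ⟨x, y⟩ hp1 hp2
      rcases Finset.mem_union.mp h1 with hA | hA <;>
        rcases Finset.mem_union.mp h2 with hB | hB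
      · obtain ⟨k1, hk1, rfl⟩ := hbig_mem e1 hA
        obtain ⟨k2, hk2, rfl⟩ := hbig_mem e2 hB
        obtain ⟨hx1, _, _⟩ := hbig_blk k1 x y hk1 hp1
        obtain ⟨hx2, _, _⟩ := hbig_blk k2 x y hk2 hp2
        exact hne12 (by rw [show k1 = k2 by omega])
      · obtain ⟨k, hk, rfl⟩ := hbig_mem e1 hA
        obtain ⟨l, hl, e', he', rfl⟩ := hsh_mem e2 hB
        exact key_bs k hk l e' he' x y hp1 hp2
      · obtain ⟨l, hl, e', he', rfl⟩ := hsh_mem e1 hA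
        obtain ⟨k, hk, rfl⟩ := hbig_mem e2 hB
        exact key_bs k hk l e' he' x y hp2 hp1
      · obtain ⟨l1, hl1, e1', he1', rfl⟩ := hsh_mem e1 hA
        obtain ⟨l2, hl2, e2', he2', rfl⟩ := hsh_mem e2 hB
        obtain ⟨hx1, hy1, hr1⟩ := hsh_blk l1 e1' he1' x y hp1
        obtain ⟨hx2, hy2, hr2⟩ := hsh_blk l2 e2' he2' x y hp2
        have hll : l1 = l2 := by omega
        subst hll
        have hee : e1' ≠ e2' := by
          intro hEq; exact hne12 (by rw [hEq])
        exact Finset.disjoint_left.mp (hdisj e1' he1' e2' he2' hee) hr1 hr2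
    · -- coverage
      intro i j
      rw [hbm]
      constructor
      · rintro ⟨hij, hj⟩
        have hkl : i / m ≤ j / m := Nat.div_le_div_right hij
        have hlb : j / m < b := (Nat.div_lt_iff_lt_mul hm1).mpr hj
        obtain ⟨hqi1, hqi2⟩ := hdivq i
        obtain ⟨hqj1, hqj2⟩ := hdivq j
        by_cases hkeq : i / m = j / m
        · rw [← hkeq] at hqj1 hqj2
          obtain ⟨e, he, hmem⟩ :=
            (hcov (i - (i/m)*m) (j - (i/m)*m)).mp ⟨by omega, by omega⟩
          obtain ⟨⟨a1, a2⟩, a3, a4⟩ := mem_rect.mp hmem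
          refine ⟨shf (i/m, e), Finset.mem_union_right _ ?_,
            hsh_rect _ _ _ _ (by omega) (by omega) (by omega) (by omega)⟩
          rw [hsh, Finset.mem_image]
          refine ⟨(i/m, e), Finset.mem_product.mpr ⟨?_, ?_⟩, rfl⟩
          · show i/m ∈ Finset.range b
            exact Finset.mem_range.mpr (by omega)
          · exact he
        · have hkl' : i/m + 1 ≤ j/m := by omega
          have hmul1 : (i/m + 1)*m ≤ (j/m)*m := Nat.mul_le_mul_right m hkl'
          have hmul2 : (i/m + 1)*m = (i/m)*m + m := by ring
          have hmul3 : (j/m + 1)*m ≤ b*m := Nat.mul_le_mul_right m (by omega)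
          have hmul4 : (j/m + 1)*m = (j/m)*m + m := by ring
          refine ⟨bigf (i/m), Finset.mem_union_left _ ?_,
            hbig_rect _ _ _ (by omega) (by omega) (by omega) (by omega)⟩
          rw [hbig, Finset.mem_image]
          exact ⟨i/m, Finset.mem_range.mpr (by omega), rfl⟩
      · rintro ⟨e, he, hmem⟩
        have hmb : m ≤ b*m := Nat.le_mul_of_pos_left m (by omega)
        rcases Finset.mem_union.mp he with h | h
        · obtain ⟨k, hk, rfl⟩ := hbig_mem e h
          obtain ⟨hik, hjy, hjb⟩ := hbig_blk k i j hk hmem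
          obtain ⟨hqi1, hqi2⟩ := hdivq i
          rw [hik] at hqi1 hqi2
          have e1 : (k+1)*m = k*m + m := by ring
          omega
        · obtain ⟨k, hk, e', he', rfl⟩ := hsh_mem e h
          obtain ⟨hik, hjk, hr⟩ := hsh_blk k e' he' i j hmem
          obtain ⟨hqi1, hqi2⟩ := hdivq i
          obtain ⟨hqj1, hqj2⟩ := hdivq j
          rw [hik] at hqi1 hqi2
          rw [hjk] at hqj1 hqj2
          have := (hcov (i - k*m) (j - k*m)).mpr ⟨e', he', hr⟩
          have e1 : (k+1)*m ≤ b*m := Nat.mul_le_mul_right m (by omega)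
          have e2 : (k+1)*m = k*m + m := by ring
          omega
    · -- cardinality
      have h1 : big.card ≤ b - 1 := by
        rw [hbig]
        exact le_trans Finset.card_image_le (by simp)
      have h2 : sh.card ≤ b * F.card := by
        rw [hsh]
        refine le_trans Finset.card_image_le ?_
        rw [Finset.card_product, Finset.card_range]
      have h4 : b * F.card ≤ b * (2 * m - 1) := Nat.mul_le_mul_left b (by omega)
      have h5 : b * (2 * m - 1) + b = 2 * (b * m) := by
        have h : 2 * m - 1 + 1 = 2 * m := by omega
        calc b * (2 * m - 1) + b = b * ((2 * m - 1) + 1) := by ring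
          _ = b * (2 * m) := by rw [h]
          _ = 2 * (b * m) := by ring
      have h6 := Finset.card_union_le big sh
      rw [hbm]
      omega
    · -- row counts
      intro i hi
      rw [hbm] at hi
      obtain ⟨hqi1, hqi2⟩ := hdivq i
      have hkb : i / m < b := (Nat.div_lt_iff_lt_mul hm1).mpr hi
      rw [Finset.filter_union]
      refine le_trans (Finset.card_union_le _ _) ?_
      have hBig : (big.filter (fun e => e.1.1 ≤ i ∧ i ≤ e.1.2)).card ≤ 1 := by
        rw [Finset.card_le_one]
        intro a ha c hc
        rw [Finset.mem_filter] at ha hc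
        obtain ⟨k1, hk1, rfl⟩ := hbig_mem a ha.1
        obtain ⟨k2, hk2, rfl⟩ := hbig_mem c hc.1
        obtain ⟨p1, p2⟩ := ha.2
        obtain ⟨q1, q2⟩ := hc.2
        simp only [hbigf] at p1 p2 q1 q2 ⊢
        have e1 : (k1+1)*m = k1*m + m := by ring
        have e2 : (k2+1)*m = k2*m + m := by ring
        have d1 : i / m = k1 := hdiv k1 i p1 (by omega)
        have d2 : i / m = k2 := hdiv k2 i q1 (by omega)
        rw [show k1 = k2 by omega]
      have hSh : (sh.filter (fun e => e.1.1 ≤ i ∧ i ≤ e.1.2)).card ≤ z + 1 := by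
        rw [hsh, Finset.filter_image]
        refine le_trans Finset.card_image_le ?_
        have hsub : ((Finset.range b ×ˢ F).filter
            (fun a => (shf a).1.1 ≤ i ∧ i ≤ (shf a).1.2)) ⊆
            {i/m} ×ˢ (F.filter (fun e => e.1.1 ≤ i - (i/m)*m ∧ i - (i/m)*m ≤ e.1.2)) := by
          rintro ⟨l, e'⟩ hmem'
          rw [Finset.mem_filter, Finset.mem_product, Finset.mem_range] at hmem'
          obtain ⟨⟨hl, he'⟩, p1, p2⟩ := hmem'
          have hl' : l < b := hl
          have he'' : e' ∈ F := he'
          simp [hshf] at p1 p2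
          obtain ⟨b1, b2, b3, b4⟩ := hbound e' he''
          have d1 : i / m = l := hdiv l i (by omega) (by omega)
          rw [← d1] at p1 p2
          refine Finset.mem_product.mpr ⟨?_, ?_⟩
          · show l ∈ ({i/m} : Finset ℕ)
            exact Finset.mem_singleton.mpr d1.symm
          · show e' ∈ F.filter _
            refine Finset.mem_filter.mpr ⟨he'', ?_, ?_⟩ <;> omega
        refine le_trans (Finset.card_le_card hsub) ?_
        rw [Finset.card_product, Finset.card_singleton, one_mul]
        exact hrow (i - (i/m)*m) (by omega)
      omega
    · -- column counts
      intro j hj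
      rw [hbm] at hj
      obtain ⟨hqj1, hqj2⟩ := hdivq j
      have hkb : j / m < b := (Nat.div_lt_iff_lt_mul hm1).mpr hj
      rw [Finset.filter_union]
      refine le_trans (Finset.card_union_le _ _) ?_
      have hBig : (big.filter (fun e => e.2.1 ≤ j ∧ j ≤ e.2.2)).card ≤ b - 1 := by
        refine le_trans (Finset.card_filter_le _ _) ?_
        rw [hbig]
        exact le_trans Finset.card_image_le (by simp)
      have hSh : (sh.filter (fun e => e.2.1 ≤ j ∧ j ≤ e.2.2)).card ≤ z * (b-1) + 1 := by
        rw [hsh, Finset.filter_image]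
        refine le_trans Finset.card_image_le ?_
        have hsub : ((Finset.range b ×ˢ F).filter
            (fun a => (shf a).2.1 ≤ j ∧ j ≤ (shf a).2.2)) ⊆
            {j/m} ×ˢ (F.filter (fun e => e.2.1 ≤ j - (j/m)*m ∧ j - (j/m)*m ≤ e.2.2)) := by
          rintro ⟨l, e'⟩ hmem'
          rw [Finset.mem_filter, Finset.mem_product, Finset.mem_range] at hmem'
          obtain ⟨⟨hl, he'⟩, p1, p2⟩ := hmem'
          have hl' : l < b := hl
          have he'' : e' ∈ F := he'
          simp [hshf] at p1 p2
          obtain ⟨b1, b2, b3, b4⟩ := hbound e' he''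
          have d1 : j / m = l := hdiv l j (by omega) (by omega)
          rw [← d1] at p1 p2
          refine Finset.mem_product.mpr ⟨?_, ?_⟩
          · show l ∈ ({j/m} : Finset ℕ)
            exact Finset.mem_singleton.mpr d1.symm
          · show e' ∈ F.filter _
            refine Finset.mem_filter.mpr ⟨he'', ?_, ?_⟩ <;> omega
        refine le_trans (Finset.card_le_card hsub) ?_
        rw [Finset.card_product, Finset.card_singleton, one_mul]
        exact hcol (j - (j/m)*m) (by omega)
      have hmul : (z+1) * (b-1) = z * (b-1) + (b-1) := by ring
      omega
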